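/- A permutation group G on [n] is primitive if and only if for every transformation f : [n] → [n] of rank n−1 and all distinct 2-element subsets {a,b}, {c,d} of [n], there exists g in the transformation monoid generated by G ∪ {f} such that exactly one of the sets g({a,b}) and g({c,d}) is a singleton. -/

import Mathlib

open Finset

/-- The set of functions on `Fin n` arising from elements of the permutation group `G`. -/
def permSet {n : ℕ} (G : Subgroup (Equiv.Perm (Fin n))) : Set (Function.End (Fin n)) :=
  {h | ∃ g ∈ G, h = ⇑g}

/-- The transformation monoid generated by `G ∪ {f}`. -/
def genMon {n : ℕ} (G : Subgroup (Equiv.Perm (Fin n))) (f : Fin n → Fin n) :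
    Submonoid (Function.End (Fin n)) :=
  Submonoid.closure (permSet G ∪ {f})

/-- A permutation group is primitive if no subset `Δ` with `1 < |Δ| < n` is a block. -/
def IsPrimitive' {n : ℕ} (G : Subgroup (Equiv.Perm (Fin n))) : Prop :=
  ¬ ∃ Δ : Finset (Fin n), 1 < Δ.card ∧ Δ.card < n ∧
      ∀ g ∈ G, Δ.image ⇑g = Δ ∨ Disjoint (Δ.image ⇑g) Δ

namespace TwoSetSep

variable {n : ℕ} {G : Subgroup (Equiv.Perm (Fin n))} {f : Fin n → Fin n}

/-- rank of a transformation -/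
def rnk (w : Function.End (Fin n)) : ℕ := (univ.image w).card

/-- coercion of a permutation to a transformation -/
def pe (g : Equiv.Perm (Fin n)) : Function.End (Fin n) := ⇑g

lemma pe_apply (g : Equiv.Perm (Fin n)) (x : Fin n) : pe g x = g x := rfl

/-- a transformation as an element of `Function.End` -/
def fe (f : Fin n → Fin n) : Function.End (Fin n) := f

lemma end_mul_apply (a b : Function.End (Fin n)) (x : Fin n) : (a * b) x = a (b x) := rfl

lemma mem_perm {g : Equiv.Perm (Fin n)} (hg : g ∈ G) : pe g ∈ genMon G f :=
  Submonoid.subset_closure (Or.inl ⟨g, hg, rfl⟩)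

lemma mem_f : (f : Function.End (Fin n)) ∈ genMon G f :=
  Submonoid.subset_closure (Or.inr rfl)

lemma image_mul (a b : Function.End (Fin n)) :
    univ.image (a * b) = (univ.image b).image a := by
  rw [Function.End.mul_def]
  exact (Finset.image_image).symm

lemma rnk_one_eq : rnk (1 : Function.End (Fin n)) = n := by
  have : (1 : Function.End (Fin n)) = id := rfl
  simp [rnk, this]

lemma rnk_le_card (w : Function.End (Fin n)) : rnk w ≤ n := by
  simpa [rnk] using (Finset.card_image_le (s := (univ : Finset (Fin n))) (f := w)).trans (by simp)

lemma rnk_pos (w : Function.End (Fin n)) (hn : 1 ≤ n) : 1 ≤ rnk w := by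
  have : (univ : Finset (Fin n)).Nonempty := by
    exact Finset.univ_nonempty_iff.mpr (Fin.pos_iff_nonempty.mp hn)
  exact Finset.card_pos.mpr (this.image w)

lemma rnk_mul_le (a w : Function.End (Fin n)) : rnk (a * w) ≤ rnk w := by
  rw [rnk, image_mul]; exact Finset.card_image_le

lemma rnk_perm_mul (g : Equiv.Perm (Fin n)) (w : Function.End (Fin n)) :
    rnk (pe g * w) = rnk w := by
  rw [rnk, image_mul]
  exact Finset.card_image_of_injective _ g.injective

lemma const_rnk_one (w : Function.End (Fin n)) (hn : 1 ≤ n) (h : ∀ x y, w x = w y) :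
    rnk w = 1 := by
  have hne : (univ : Finset (Fin n)).Nonempty := by
    exact Finset.univ_nonempty_iff.mpr (Fin.pos_iff_nonempty.mp hn)
  obtain ⟨x0, _⟩ := hne
  refine Finset.card_eq_one.mpr ⟨w x0, ?_⟩
  ext z
  simp only [Finset.mem_image (f := (w : Fin n → Fin n)), mem_univ, true_and, Finset.mem_singleton]
  constructor
  · rintro ⟨y, rfl⟩; exact h y x0
  · rintro rfl; exact ⟨x0, rfl⟩

/-- Key primitivity lemma: if a function identifies all translates of a pair, it is constant. -/
lemma prim_key (hG : IsPrimitive' G) {a b : Fin n} (hab : a ≠ b)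
    (w : Fin n → Fin n) (hw : ∀ g ∈ G, w (g a) = w (g b)) : ∀ x y, w x = w y := by
  classical
  set r : Fin n → Fin n → Prop := fun x y => ∃ g ∈ G, (g a = x ∧ g b = y) ∨ (g a = y ∧ g b = x)
    with hr
  set E := Relation.EqvGen r with hE
  have hEw : ∀ x y, E x y → w x = w y := by
    intro x y h
    induction h with
    | rel x y hxy =>
        obtain ⟨g, hg, h⟩ := hxy
        rcases h with ⟨h1, h2⟩ | ⟨h1, h2⟩
        · rw [← h1, ← h2]; exact hw g hg
        · rw [← h1, ← h2]; exact (hw g hg).symm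
    | refl x => rfl
    | symm x y _ ih => exact ih.symm
    | trans x y z _ _ ih1 ih2 => exact ih1.trans ih2
  have hEg : ∀ g ∈ G, ∀ x y, E x y → E (g x) (g y) := by
    intro g hg x y h
    induction h with
    | rel x y hxy =>
        obtain ⟨g', hg', h⟩ := hxy
        refine Relation.EqvGen.rel _ _ ⟨g * g', mul_mem hg hg', ?_⟩
        rcases h with ⟨h1, h2⟩ | ⟨h1, h2⟩
        · exact Or.inl ⟨by simp [h1], by simp [h2]⟩
        · exact Or.inr ⟨by simp [h1], by simp [h2]⟩
    | refl x => exact Relation.EqvGen.refl _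
    | symm x y _ ih => exact Relation.EqvGen.symm _ _ ih
    | trans x y z _ _ ih1 ih2 => exact Relation.EqvGen.trans _ _ _ ih1 ih2
  set Δ : Fin n → Finset (Fin n) := fun x => univ.filter (fun z => E x z) with hΔ
  have hmem : ∀ x z, z ∈ Δ x ↔ E x z := by intro x z; simp [hΔ]
  have hclass : ∀ x z, E x z → Δ x = Δ z := by
    intro x z hxz
    ext t
    simp only [hmem]
    exact ⟨fun h => Relation.EqvGen.trans _ _ _ (Relation.EqvGen.symm _ _ hxz) h,
      fun h => Relation.EqvGen.trans _ _ _ hxz h⟩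
  have himg : ∀ g ∈ G, (Δ a).image g = Δ (g a) := by
    intro g hg
    ext z
    simp only [mem_image, hmem]
    constructor
    · rintro ⟨t, ht, rfl⟩
      exact hEg g hg _ _ ht
    · intro h
      refine ⟨g⁻¹ z, ?_, by simp⟩
      have := hEg g⁻¹ (inv_mem hg) _ _ h
      simpa using this
  have hblock : ∀ g ∈ G, (Δ a).image g = Δ a ∨ Disjoint ((Δ a).image g) (Δ a) := by
    intro g hg
    rw [himg g hg]
    by_cases hd : Disjoint (Δ (g a)) (Δ a)
    · exact Or.inr hd
    · left
      obtain ⟨z, hz1, hz2⟩ := Finset.not_disjoint_iff.mp hd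
      rw [hmem] at hz1 hz2
      exact (hclass a (g a) (Relation.EqvGen.trans _ _ _ hz2 (Relation.EqvGen.symm _ _ hz1))).symm
  have hcard2 : 1 < (Δ a).card := by
    rw [Finset.one_lt_card]
    exact ⟨a, (hmem a a).mpr (Relation.EqvGen.refl a), b,
      (hmem a b).mpr (Relation.EqvGen.rel _ _ ⟨1, one_mem G, Or.inl ⟨by simp, by simp⟩⟩), hab⟩
  have huniv : Δ a = univ := by
    by_contra hne
    have hlt : (Δ a).card < n := by
      have hle : (Δ a).card ≤ n := by simpa using Finset.card_le_card (Δ a).subset_univ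
      rcases lt_or_eq_of_le hle with h | h
      · exact h
      · exact absurd (Finset.eq_univ_of_card _ (by simpa using h)) hne
    exact hG ⟨Δ a, hcard2, hlt, hblock⟩
  have hEall : ∀ z, E a z := by
    intro z
    have : z ∈ Δ a := huniv ▸ mem_univ z
    exact (hmem a z).mp this
  intro x y
  exact (hEw a x (hEall x)).symm.trans (hEw a y (hEall y))

/-- primitive groups are transitive when `3 ≤ n` -/
lemma prim_trans (hG : IsPrimitive' G) (hn : 3 ≤ n) : ∀ x y : Fin n, ∃ g ∈ G, g x = y := by
  classical
  set Orb : Fin n → Finset (Fin n) := fun x => univ.filter (fun z => ∃ g ∈ G, g x = z) with hOrb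
  have hmem : ∀ x z, z ∈ Orb x ↔ ∃ g ∈ G, g x = z := by intro x z; simp [hOrb]
  have hself : ∀ x, x ∈ Orb x := fun x => (hmem x x).mpr ⟨1, one_mem G, by simp⟩
  have himg : ∀ x, ∀ g ∈ G, (Orb x).image g = Orb x := by
    intro x g hg
    ext z
    simp only [mem_image, hmem]
    constructor
    · rintro ⟨t, ⟨g', hg', rfl⟩, rfl⟩
      exact ⟨g * g', mul_mem hg hg', by simp⟩
    · rintro ⟨g'', hg'', rfl⟩
      exact ⟨g⁻¹ (g'' x), ⟨g⁻¹ * g'', mul_mem (inv_mem hg) hg'', by simp⟩, by simp⟩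
  have key : ∀ x : Fin n, Orb x = {x} ∨ Orb x = univ := by
    intro x
    by_cases h1 : 1 < (Orb x).card
    · right
      by_contra hne
      have hlt : (Orb x).card < n := by
        have hle : (Orb x).card ≤ n := by simpa using Finset.card_le_card (Orb x).subset_univ
        rcases lt_or_eq_of_le hle with h | h
        · exact h
        · exact absurd (Finset.eq_univ_of_card _ (by simpa using h)) hne
      exact hG ⟨Orb x, h1, hlt, fun g hg => Or.inl (himg x g hg)⟩
    · left
      push_neg at h1
      have : (Orb x).card = 1 := le_antisymm h1 (Finset.card_pos.mpr ⟨x, hself x⟩)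
      obtain ⟨c, hc⟩ := Finset.card_eq_one.mp this
      have := hself x
      rw [hc] at this ⊢
      simp only [mem_singleton] at this
      rw [this]
  intro x y
  rcases key x with hx | hx
  · rcases key y with hy | hy
    · by_cases hxy : x = y
      · exact ⟨1, one_mem G, by simp [hxy]⟩
      · exfalso
        have hfix : ∀ g ∈ G, g x = x ∧ g y = y := by
          intro g hg
          have h1 : g x ∈ Orb x := (hmem x (g x)).mpr ⟨g, hg, rfl⟩
          have h2 : g y ∈ Orb y := (hmem y (g y)).mpr ⟨g, hg, rfl⟩
          rw [hx] at h1; rw [hy] at h2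
          exact ⟨by simpa using h1, by simpa using h2⟩
        refine hG ⟨{x, y}, ?_, ?_, ?_⟩
        · rw [Finset.card_pair hxy]; norm_num
        · rw [Finset.card_pair hxy]; omega
        · intro g hg
          left
          rw [show ({x, y} : Finset (Fin n)) = insert x {y} from rfl, Finset.image_insert,
            Finset.image_singleton, (hfix g hg).1, (hfix g hg).2]
    · have : x ∈ Orb y := hy ▸ mem_univ x
      obtain ⟨g, hg, hgx⟩ := (hmem y x).mp this
      exact ⟨g⁻¹, inv_mem hg, by rw [← hgx]; simp⟩
  · have : y ∈ Orb x := hx ▸ mem_univ y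
    exact (hmem x y).mp this


/-- Structure of a rank `n-1` map. -/
structure FStruct (n : ℕ) (f : Fin n → Fin n) where
  u : Fin n
  v : Fin n
  w0 : Fin n
  huv : u ≠ v
  hfuv : f u = f v
  hw0 : w0 ∉ univ.image f
  him : ∀ x, x ≠ w0 → x ∈ univ.image f
  hcol : ∀ x y, f x = f y → x = y ∨ (x = u ∧ y = v) ∨ (x = v ∧ y = u)

lemma exists_fstruct (hf : (univ.image f).card = n - 1) (hn : 2 ≤ n) :
    Nonempty (FStruct n f) := by
  classical
  have hcu : (univ : Finset (Fin n)).card = n := by simp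
  have hninj : ¬ Function.Injective f := by
    intro h
    have := Finset.card_image_of_injective (univ : Finset (Fin n)) h
    rw [hf, hcu] at this
    omega
  obtain ⟨u, v, hfuv, huv⟩ := Function.not_injective_iff.mp hninj
  have hsd : (univ \ univ.image f).Nonempty := by
    rw [← Finset.card_pos, Finset.card_sdiff_of_subset (Finset.subset_univ _), hcu, hf]
    omega
  obtain ⟨w0, hw0'⟩ := hsd
  have hw0 : w0 ∉ univ.image f := (Finset.mem_sdiff.mp hw0').2
  have himeq : univ.image f = univ.erase w0 := by
    apply Finset.eq_of_subset_of_card_le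
    · exact Finset.subset_erase.mpr ⟨Finset.subset_univ _, hw0⟩
    · rw [Finset.card_erase_of_mem (mem_univ _), hcu, hf]
  have him : ∀ x, x ≠ w0 → x ∈ univ.image f := by
    intro x hx
    rw [himeq]
    exact Finset.mem_erase.mpr ⟨hx, mem_univ _⟩
  have him2 : (univ.erase v).image f = univ.image f := by
    apply subset_antisymm
    · exact Finset.image_subset_image (Finset.erase_subset _ _)
    · intro z hz
      obtain ⟨y, _, rfl⟩ := Finset.mem_image.mp hz
      by_cases hy : y = v
      · refine Finset.mem_image.mpr ⟨u, Finset.mem_erase.mpr ⟨huv, mem_univ _⟩, ?_⟩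
        rw [hy] at *; exact hfuv
      · exact Finset.mem_image.mpr ⟨y, Finset.mem_erase.mpr ⟨hy, mem_univ _⟩, rfl⟩
  have hinj : Set.InjOn f (univ.erase v : Finset (Fin n)) := by
    rw [← Finset.card_image_iff, him2, hf, Finset.card_erase_of_mem (mem_univ _), hcu]
  have hcol : ∀ x y, f x = f y → x = y ∨ (x = u ∧ y = v) ∨ (x = v ∧ y = u) := by
    intro x y hxy
    by_cases hxyeq : x = y
    · exact Or.inl hxyeq
    by_cases hx : x = v
    · have hyv : y ≠ v := fun h => hxyeq (hx.trans h.symm)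
      have : f y = f u := by rw [← hxy, hx, hfuv]
      have hyu : y = u := hinj (by simp [hyv]) (by simp [huv]) this
      exact Or.inr (Or.inr ⟨hx, hyu⟩)
    by_cases hy : y = v
    · have : f x = f u := by rw [hxy, hy, hfuv]
      have hxu : x = u := hinj (by simp [hx]) (by simp [huv]) this
      exact Or.inr (Or.inl ⟨hxu, hy⟩)
    · exact Or.inl (hinj (by simp [hx]) (by simp [hy]) hxy)
  exact ⟨⟨u, v, w0, huv, hfuv, hw0, him, hcol⟩⟩

lemma injOn_no_uv (FS : FStruct n f) {T : Finset (Fin n)} (hT : ¬ (FS.u ∈ T ∧ FS.v ∈ T)) :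
    Set.InjOn f (T : Finset (Fin n)) := by
  intro x hx y hy hxy
  simp only [Finset.mem_coe] at hx hy
  rcases FS.hcol x y hxy with h | ⟨h1, h2⟩ | ⟨h1, h2⟩
  · exact h
  · exact absurd ⟨h1 ▸ hx, h2 ▸ hy⟩ hT
  · exact absurd ⟨h2 ▸ hy, h1 ▸ hx⟩ hT

lemma rnk_f_mul_ge (FS : FStruct n f) (w : Function.End (Fin n)) :
    rnk w ≤ rnk (fe f * w) + 1 := by
  classical
  set T := univ.image w with hT
  have h1 : rnk (fe f * w) = (T.image f).card := by
    rw [rnk, image_mul]; rfl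
  have hinj : Set.InjOn f ((T.erase FS.v) : Finset (Fin n)) := by
    apply injOn_no_uv FS
    rintro ⟨-, hv⟩
    exact (Finset.mem_erase.mp hv).1 rfl
  have h2 : ((T.erase FS.v).image f).card = (T.erase FS.v).card :=
    Finset.card_image_of_injOn hinj
  have h3 : (T.erase FS.v).image f ⊆ T.image f :=
    Finset.image_subset_image (Finset.erase_subset _ _)
  have h4 : T.card ≤ (T.erase FS.v).card + 1 := by
    by_cases hv : FS.v ∈ T
    · rw [Finset.card_erase_of_mem hv]
      have : 1 ≤ T.card := Finset.card_pos.mpr ⟨FS.v, hv⟩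
      omega
    · rw [Finset.erase_eq_of_notMem hv]
      omega
  calc rnk w = T.card := rfl
    _ ≤ (T.erase FS.v).card + 1 := h4
    _ = ((T.erase FS.v).image f).card + 1 := by rw [h2]
    _ ≤ (T.image f).card + 1 := by have := Finset.card_le_card h3; omega
    _ = rnk (fe f * w) + 1 := by rw [h1]

lemma exists_rank_list (FS : FStruct n f) :
    ∀ (l : List (Function.End (Fin n))),
      (∀ y ∈ l, y ∈ (permSet G ∪ {f} : Set (Function.End (Fin n)))) →
      ∀ k, rnk l.prod ≤ k → k ≤ n → ∃ w ∈ genMon G f, rnk w = k := by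
  intro l
  induction l with
  | nil =>
      intro _ k hk hkn
      have hn1 : rnk (List.prod ([] : List (Function.End (Fin n)))) = n := by
        rw [List.prod_nil]; exact rnk_one_eq
      have : k = n := by omega
      exact ⟨1, one_mem _, by rw [this]; exact rnk_one_eq⟩
  | cons a t ih =>
      intro hmem k hk hkn
      by_cases h : rnk t.prod ≤ k
      · exact ih (fun y hy => hmem y (List.mem_cons_of_mem _ hy)) k h hkn
      push_neg at h
      have hka : rnk ((a :: t).prod) = rnk (a * t.prod) := by rw [List.prod_cons]
      rcases hmem a List.mem_cons_self with ⟨g, hg, hag⟩ | ha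
      · exfalso
        have : rnk (a * t.prod) = rnk t.prod := by
          rw [hag]; exact rnk_perm_mul g t.prod
        omega
      · have haf : a = (f : Function.End (Fin n)) := Set.mem_singleton_iff.mp ha
        have hge : rnk t.prod ≤ rnk (a * t.prod) + 1 := by
          rw [haf]; exact rnk_f_mul_ge FS t.prod
        have hle : rnk (a * t.prod) ≤ rnk t.prod := rnk_mul_le a t.prod
        have heq : rnk ((a :: t).prod) = k := by omega
        refine ⟨(a :: t).prod, ?_, heq⟩
        exact list_prod_mem (fun x hx => Submonoid.subset_closure (hmem x hx))

lemma exists_rank_two (FS : FStruct n f) (hn : 2 ≤ n)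
    (hc : ∃ w ∈ genMon G f, rnk w ≤ 2) : ∃ w ∈ genMon G f, rnk w = 2 := by
  obtain ⟨w, hw, hr⟩ := hc
  obtain ⟨l, hl, hlp⟩ := Submonoid.exists_list_of_mem_closure hw
  exact exists_rank_list FS l hl 2 (by rw [hlp]; exact hr) hn


lemma rnk_mul_le_left (a w : Function.End (Fin n)) : rnk (a * w) ≤ rnk a := by
  rw [rnk, image_mul]
  exact Finset.card_le_card (Finset.image_subset_image (Finset.subset_univ _))

/-- the subgroup as a finset -/
noncomputable def GF (G : Subgroup (Equiv.Perm (Fin n))) : Finset (Equiv.Perm (Fin n)) :=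
  @Finset.filter _ (· ∈ G) (Classical.decPred _) univ

lemma mem_GF {g : Equiv.Perm (Fin n)} : g ∈ GF G ↔ g ∈ G := by
  simp [GF]

lemma GF_card_pos : 0 < (GF G).card :=
  Finset.card_pos.mpr ⟨1, mem_GF.mpr (one_mem G)⟩

/-- number of group elements mapping y to x -/
noncomputable def cnt (G : Subgroup (Equiv.Perm (Fin n))) (y x : Fin n) : ℕ :=
  ((GF G).filter (fun g => g y = x)).card

lemma cnt_const (hG : IsPrimitive' G) (hn : 3 ≤ n) (y x x' : Fin n) :
    cnt G y x = cnt G y x' := by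
  obtain ⟨g1, hg1, hgx⟩ := prim_trans hG hn x x'
  apply Finset.card_bij (fun g _ => g1 * g)
  · intro g hg
    simp only [Finset.mem_filter, mem_GF] at hg ⊢
    exact ⟨mul_mem hg1 hg.1, by rw [Equiv.Perm.mul_apply, hg.2, hgx]⟩
  · intro g hg g' hg' hgg
    exact mul_left_cancel hgg
  · intro g' hg'
    simp only [Finset.mem_filter, mem_GF] at hg'
    refine ⟨g1⁻¹ * g', ?_, by group⟩
    simp only [Finset.mem_filter, mem_GF]
    refine ⟨mul_mem (inv_mem hg1) hg'.1, ?_⟩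
    rw [Equiv.Perm.mul_apply, hg'.2, ← hgx]
    simp

lemma cnt_mul_n (hG : IsPrimitive' G) (hn : 3 ≤ n) (y x : Fin n) :
    cnt G y x * n = (GF G).card := by
  have hfib : (GF G).card = ∑ z ∈ (univ : Finset (Fin n)), cnt G y z :=
    Finset.card_eq_sum_card_fiberwise (fun g _ => mem_univ (g y))
  have hconst : ∀ z ∈ (univ : Finset (Fin n)), cnt G y z = cnt G y x :=
    fun z _ => cnt_const hG hn y z x
  rw [hfib, Finset.sum_congr rfl hconst, Finset.sum_const, Finset.card_univ,
    Fintype.card_fin, smul_eq_mul, mul_comm]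

open Classical in
lemma uniform (hG : IsPrimitive' G) (hn : 3 ≤ n)
    (r0 : ℕ) (hmin : ∀ w ∈ genMon G f, r0 ≤ rnk w)
    (h : Function.End (Fin n)) (hhM : h ∈ genMon G f) (hh : rnk h = r0)
    (t : Function.End (Fin n)) (htM : t ∈ genMon G f) (ht : rnk t = r0)
    (s : Fin n) (hs : s ∈ univ.image t) :
    (univ.filter (fun z => t z = s)).card * r0 = n := by
  classical
  set S := univ.image h with hSdef
  have hScard : S.card = r0 := hh
  set K := univ.filter (fun z => t z = s) with hKdef
  have htrans : ∀ g : Equiv.Perm (Fin n), g ∈ G →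
      ((S.image ⇑g).filter (fun z => t z = s)).card = 1 := by
    intro g hg
    have hM' : t * (pe g * h) ∈ genMon G f := mul_mem htM (mul_mem (mem_perm hg) hhM)
    have him : univ.image (t * (pe g * h)) = (S.image ⇑g).image t := by
      rw [image_mul, image_mul]
      rfl
    have hge : r0 ≤ ((S.image ⇑g).image t).card := by
      have := hmin _ hM'
      rwa [rnk, him] at this
    have hSg : (S.image ⇑g).card = r0 := by
      rw [Finset.card_image_of_injective _ g.injective, hScard]
    have hle : ((S.image ⇑g).image t).card ≤ r0 := hSg ▸ Finset.card_image_le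
    have hinj : Set.InjOn t ((S.image ⇑g) : Finset (Fin n)) := by
      apply Finset.card_image_iff.mp
      rw [hSg]
      omega
    have heqim : (S.image ⇑g).image t = univ.image t := by
      apply Finset.eq_of_subset_of_card_le
      · intro z hz
        obtain ⟨y, _, rfl⟩ := Finset.mem_image.mp hz
        exact Finset.mem_image.mpr ⟨y, mem_univ _, rfl⟩
      · have : (univ.image t).card = r0 := ht
        omega
    rw [Finset.card_eq_one]
    have hsmem : s ∈ (S.image ⇑g).image t := heqim ▸ hs
    obtain ⟨z0, hz0, hz0s⟩ := Finset.mem_image.mp hsmem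
    refine ⟨z0, ?_⟩
    ext z
    simp only [Finset.mem_filter, Finset.mem_singleton]
    constructor
    · rintro ⟨hzS, hzs⟩
      exact hinj (Finset.mem_coe.mpr hzS) (Finset.mem_coe.mpr hz0) (hzs.trans hz0s.symm)
    · rintro rfl
      exact ⟨hz0, hz0s⟩
  have hsum1 : ∑ g ∈ GF G, ((S.image ⇑g).filter (fun z => t z = s)).card = (GF G).card := by
    rw [Finset.sum_congr rfl (fun g hg => htrans g (mem_GF.mp hg)), Finset.sum_const,
      smul_eq_mul, mul_one]
  have hswap : ∀ g : Equiv.Perm (Fin n),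
      ((S.image ⇑g).filter (fun z => t z = s)).card
        = ∑ z ∈ K, (if z ∈ S.image ⇑g then 1 else 0) := by
    intro g
    have hre : (S.image ⇑g).filter (fun z => t z = s) = K.filter (fun z => z ∈ S.image ⇑g) := by
      ext z
      simp only [Finset.mem_filter, hKdef, mem_univ, true_and]
      tauto
    rw [hre, Finset.card_filter]
  have hsum2 : ∑ g ∈ GF G, ∑ z ∈ K, (if z ∈ S.image ⇑g then 1 else 0)
      = ∑ z ∈ K, ∑ y ∈ S, cnt G y z := by
    rw [Finset.sum_comm]
    refine Finset.sum_congr rfl (fun z hz => ?_)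
    rw [← Finset.card_filter]
    rw [Finset.card_eq_sum_card_fiberwise (f := fun g => g⁻¹ z) (t := S) ?_]
    · refine Finset.sum_congr rfl (fun y hy => ?_)
      congr 1
      ext g
      simp only [Finset.mem_filter, mem_GF]
      constructor
      · rintro ⟨⟨hgG, _⟩, hgy⟩
        refine ⟨hgG, ?_⟩
        rw [← hgy]
        simp
      · rintro ⟨hgG, hgy⟩
        refine ⟨⟨hgG, ?_⟩, ?_⟩
        · exact Finset.mem_image.mpr ⟨y, hy, hgy⟩
        · rw [← hgy]; simp
    · intro g hg
      simp only [Finset.mem_coe, Finset.mem_filter, mem_GF] at hg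
      obtain ⟨y, hy, rfl⟩ := Finset.mem_image.mp hg.2
      simpa using hy
  have htot : ∑ z ∈ K, ∑ y ∈ S, cnt G y z = (GF G).card := by
    rw [← hsum2, ← hsum1]
    exact Finset.sum_congr rfl (fun g _ => (hswap g).symm)
  have hmain : K.card * r0 * (GF G).card = n * (GF G).card := by
    calc K.card * r0 * (GF G).card
        = ∑ z ∈ K, ∑ y ∈ S, (GF G).card := by
          rw [Finset.sum_const, Finset.sum_const, smul_eq_mul, smul_eq_mul, hScard, mul_assoc]
      _ = ∑ z ∈ K, ∑ y ∈ S, cnt G y z * n := by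
          exact Finset.sum_congr rfl (fun z _ => Finset.sum_congr rfl
            (fun y _ => (cnt_mul_n hG hn y z).symm))
      _ = (∑ z ∈ K, ∑ y ∈ S, cnt G y z) * n := by
          rw [Finset.sum_mul]
          exact Finset.sum_congr rfl (fun z _ => by rw [Finset.sum_mul])
      _ = (GF G).card * n := by rw [htot]
      _ = n * (GF G).card := mul_comm _ _
  exact Nat.eq_of_mul_eq_mul_right GF_card_pos hmain

lemma image_f_eq (FS : FStruct n f) : univ.image f = univ.erase FS.w0 := by
  apply subset_antisymm
  · exact Finset.subset_erase.mpr ⟨Finset.subset_univ _, FS.hw0⟩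
  · intro x hx
    exact FS.him x (Finset.mem_erase.mp hx).1

lemma rnk_fe (FS : FStruct n f) : rnk (fe f) = n - 1 := by
  have : univ.image (fe f) = univ.erase FS.w0 := image_f_eq FS
  rw [rnk, this, Finset.card_erase_of_mem (mem_univ _), Finset.card_univ, Fintype.card_fin]

/-- Rystsov's theorem: the monoid contains a constant map. -/
lemma exists_const (hG : IsPrimitive' G) (FS : FStruct n f) (hn : 3 ≤ n) :
    ∃ w ∈ genMon G f, rnk w = 1 := by
  classical
  have hr0mem : (sInf {r | ∃ w ∈ genMon G f, rnk w = r}) ∈ {r | ∃ w ∈ genMon G f, rnk w = r} :=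
    Nat.sInf_mem ⟨rnk (fe f), fe f, mem_f, rfl⟩
  set r0 := sInf {r | ∃ w ∈ genMon G f, rnk w = r} with hr0def
  obtain ⟨h, hhM, hh⟩ := hr0mem
  have hmin : ∀ w ∈ genMon G f, r0 ≤ rnk w := fun w hw => Nat.sInf_le ⟨w, hw, rfl⟩
  by_cases hr1 : r0 = 1
  · exact ⟨h, hhM, hh.trans hr1⟩
  exfalso
  have hr0ge1 : 1 ≤ r0 := hh ▸ rnk_pos h (by omega)
  have hr02 : 2 ≤ r0 := by omega
  have hr0le : r0 ≤ n - 1 := (rnk_fe FS) ▸ hmin (fe f) mem_f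
  have hfib : ∀ g : Equiv.Perm (Fin n), g ∈ G → h (g (f FS.u)) = h (g FS.w0) := by
    intro g hg
    set t := h * (pe g * fe f) with htdef
    have htapp : ∀ z, t z = h (g (f z)) := fun z => rfl
    have htM : t ∈ genMon G f := mul_mem hhM (mul_mem (mem_perm hg) mem_f)
    have htr : rnk t = r0 := le_antisymm (hh ▸ rnk_mul_le_left h _) (hmin _ htM)
    set s := h (g FS.w0) with hsdef
    have hs_h : s ∈ univ.image h := Finset.mem_image.mpr ⟨g FS.w0, mem_univ _, rfl⟩
    have hU := uniform hG hn r0 hmin h hhM hh h hhM hh s hs_h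
    set U := univ.filter (fun z => h z = s) with hUdef
    have hU2 : 2 ≤ U.card := by
      by_contra h2
      push_neg at h2
      have h1 : U.card ≤ 1 := by omega
      have := Nat.mul_le_mul_right r0 h1
      rw [one_mul] at this
      omega
    by_cases hund : h (g (f FS.u)) = s
    · exact hund
    exfalso
    set K := univ.filter (fun z => t z = s) with hKdef
    set D := univ.filter (fun z' => h (g z') = s) with hDdef
    have hDcard : D.card = U.card := by
      apply Finset.card_bij (fun z _ => g z)
      · intro z hz
        simp only [hDdef, hUdef, Finset.mem_filter, mem_univ, true_and] at hz ⊢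
        exact hz
      · intro z1 _ z2 _ hz
        exact g.injective hz
      · intro z hz
        simp only [hDdef, hUdef, Finset.mem_filter, mem_univ, true_and] at hz ⊢
        exact ⟨g⁻¹ z, by simpa using hz, by simp⟩
    have hw0D : FS.w0 ∈ D := by
      simp only [hDdef, Finset.mem_filter, mem_univ, true_and, hsdef]
    have hKD : K.card = (D.erase FS.w0).card := by
      apply Finset.card_bij (fun z _ => f z)
      · intro z hz
        simp only [hKdef, Finset.mem_filter, mem_univ, true_and] at hz
        rw [htapp] at hz
        refine Finset.mem_erase.mpr ⟨?_, ?_⟩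
        · intro hc
          exact FS.hw0 (hc ▸ Finset.mem_image.mpr ⟨z, mem_univ _, rfl⟩)
        · simp only [hDdef, Finset.mem_filter, mem_univ, true_and]
          exact hz
      · intro z1 hz1 z2 hz2 hz
        simp only [hKdef, Finset.mem_filter, mem_univ, true_and] at hz1 hz2
        rw [htapp] at hz1 hz2
        rcases FS.hcol z1 z2 hz with hcc | ⟨h1, h2⟩ | ⟨h1, h2⟩
        · exact hcc
        · exfalso; apply hund; rw [← hz1, h1]
        · exfalso; apply hund; rw [← hz2, h2]
      · intro d hd
        obtain ⟨hdne, hdD⟩ := Finset.mem_erase.mp hd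
        obtain ⟨z, _, rfl⟩ := Finset.mem_image.mp (FS.him d hdne)
        simp only [hDdef, Finset.mem_filter, mem_univ, true_and] at hdD
        exact ⟨z, by simp only [hKdef, Finset.mem_filter, mem_univ, true_and, htapp]; exact hdD, rfl⟩
    have hKcard : K.card = U.card - 1 := by
      rw [hKD, Finset.card_erase_of_mem hw0D, hDcard]
    have hKne : K.Nonempty := Finset.card_pos.mp (by omega)
    obtain ⟨z0, hz0⟩ := hKne
    have hz0' : t z0 = s := by
      simpa only [hKdef, Finset.mem_filter, mem_univ, true_and] using hz0
    have hsmem_t : s ∈ univ.image t := Finset.mem_image.mpr ⟨z0, mem_univ _, hz0'⟩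
    have hUt : K.card * r0 = n := by
      rw [hKdef]; convert uniform hG hn r0 hmin h hhM hh t htM htr s hsmem_t
    have hlt : (U.card - 1) * r0 < U.card * r0 :=
      Nat.mul_lt_mul_of_lt_of_le (by omega) le_rfl (by omega)
    rw [← hKcard] at hlt
    omega
  have hne : f FS.u ≠ FS.w0 :=
    fun hc => FS.hw0 (hc ▸ Finset.mem_image.mpr ⟨FS.u, mem_univ _, rfl⟩)
  have hconst := prim_key hG hne h hfib
  have : rnk h = 1 := const_rnk_one h (by omega) hconst
  omega


/-- If the monoid cannot distinguish two distinct 2-sets sharing a point, contradiction. -/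
lemma shared (hG : IsPrimitive' G) (w2 : Function.End (Fin n)) (hw2M : w2 ∈ genMon G f)
    (hw2 : rnk w2 = 2) {a b c : Fin n} (hab : a ≠ b)
    (H : ∀ w ∈ genMon G f, (w a = w c ↔ w b = w c)) : False := by
  obtain ⟨p, q, hpq, hpqim⟩ := Finset.card_eq_two.mp hw2
  have hmemim : ∀ x, w2 x ∈ ({p, q} : Finset (Fin n)) :=
    fun x => hpqim ▸ Finset.mem_image.mpr ⟨x, mem_univ _, rfl⟩
  have htwo : ∀ x y z : Fin n, w2 x ≠ w2 z → w2 y ≠ w2 z → w2 x = w2 y := by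
    intro x y z h1 h2
    have hx := hmemim x
    have hy := hmemim y
    have hz := hmemim z
    simp only [Finset.mem_insert, Finset.mem_singleton] at hx hy hz
    rcases hx with hx | hx <;> rcases hy with hy | hy <;> rcases hz with hz | hz <;>
      simp_all
  have key : ∀ g ∈ G, w2 (g a) = w2 (g b) := by
    intro g hg
    have hH : (w2 (g a) = w2 (g c)) ↔ (w2 (g b) = w2 (g c)) :=
      H (w2 * pe g) (mul_mem hw2M (mem_perm hg))
    by_cases hc : w2 (g a) = w2 (g c)
    · exact hc.trans (hH.mp hc).symm
    · exact htwo (g a) (g b) (g c) hc (fun hh => hc (hH.mpr hh))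
  have hconst := prim_key hG hab w2 key
  have : rnk w2 = 1 := const_rnk_one w2 a.pos hconst
  omega

/-- six pairwise inequalities -/
def distinct6 (p1 p2 q1 q2 : Fin n) : Prop :=
  p1 ≠ p2 ∧ q1 ≠ q2 ∧ p1 ≠ q1 ∧ p1 ≠ q2 ∧ p2 ≠ q1 ∧ p2 ≠ q2

/-- the monoid cannot distinguish the two pairs -/
def QQ (G : Subgroup (Equiv.Perm (Fin n))) (f : Fin n → Fin n) (p1 p2 q1 q2 : Fin n) : Prop :=
  ∀ t ∈ genMon G f, (t p1 = t p2 ↔ t q1 = t q2)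

lemma d6_swap_q {p1 p2 q1 q2 : Fin n} (h : distinct6 p1 p2 q1 q2) :
    distinct6 p1 p2 q2 q1 := by
  obtain ⟨h1, h2, h3, h4, h5, h6⟩ := h
  exact ⟨h1, h2.symm, h4, h3, h6, h5⟩

lemma d6_swap_p {p1 p2 q1 q2 : Fin n} (h : distinct6 p1 p2 q1 q2) :
    distinct6 p2 p1 q1 q2 := by
  obtain ⟨h1, h2, h3, h4, h5, h6⟩ := h
  exact ⟨h1.symm, h2, h5, h6, h3, h4⟩

lemma QQ_swap_q {p1 p2 q1 q2 : Fin n} (h : QQ G f p1 p2 q1 q2) : QQ G f p1 p2 q2 q1 :=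
  fun t ht => (h t ht).trans ⟨Eq.symm, Eq.symm⟩

lemma QQ_swap_p {p1 p2 q1 q2 : Fin n} (h : QQ G f p1 p2 q1 q2) : QQ G f p2 p1 q1 q2 :=
  fun t ht => ⟨fun hh => (h t ht).mp hh.symm, fun hh => ((h t ht).mpr hh).symm⟩

lemma QQ_f {p1 p2 q1 q2 : Fin n} (h : QQ G f p1 p2 q1 q2) :
    QQ G f (f p1) (f p2) (f q1) (f q2) :=
  fun t ht => h (t * fe f) (mul_mem ht mem_f)

lemma QQ_g {p1 p2 q1 q2 : Fin n} (g : Equiv.Perm (Fin n)) (hg : g ∈ G)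
    (h : QQ G f p1 p2 q1 q2) : QQ G f (g p1) (g p2) (g q1) (g q2) :=
  fun t ht => h (t * pe g) (mul_mem ht (mem_perm hg))

/-- crossing collision leads to contradiction via the shared lemma -/
lemma cross_case (hG : IsPrimitive' G) (FS : FStruct n f)
    (w2 : Function.End (Fin n)) (hw2M : w2 ∈ genMon G f) (hw2 : rnk w2 = 2)
    {p1 p2 q1 q2 : Fin n} (hd : distinct6 p1 p2 q1 q2) (hQ : QQ G f p1 p2 q1 q2)
    (hcross : f p1 = f q1) : False := by
  obtain ⟨h1, h2, h3, h4, h5, h6⟩ := hd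
  have huv : (p1 = FS.u ∧ q1 = FS.v) ∨ (p1 = FS.v ∧ q1 = FS.u) := by
    rcases FS.hcol p1 q1 hcross with h | h | h
    · exact absurd h h3
    · exact Or.inl h
    · exact Or.inr h
  have notuv : ∀ x y : Fin n, x ≠ p1 → x ≠ q1 → f x = f y → x = y := by
    intro x y hx1 hx2 hxy
    rcases FS.hcol x y hxy with h | ⟨ha, _⟩ | ⟨ha, _⟩
    · exact h
    · rcases huv with ⟨hb, _⟩ | ⟨_, hb⟩
      · exact absurd (ha.trans hb.symm) hx1
      · exact absurd (ha.trans hb.symm) hx2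
    · rcases huv with ⟨_, hb⟩ | ⟨hb, _⟩
      · exact absurd (ha.trans hb.symm) hx2
      · exact absurd (ha.trans hb.symm) hx1
  have hαz : f p2 ≠ f p1 := fun he => h1.symm (notuv p2 p1 h1.symm h5 he)
  have hβz : f q2 ≠ f p1 := by
    intro he
    have : f q2 = f q1 := he.trans hcross
    exact h2.symm (notuv q2 q1 h4.symm h2.symm this)
  have hαβ : f p2 ≠ f q2 := fun he => h6 (notuv p2 q2 h1.symm h5 he)
  have H' : ∀ w ∈ genMon G f, (w (f p2) = w (f p1) ↔ w (f q2) = w (f p1)) := by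
    intro w hw
    have hQ' : (w (f p1) = w (f p2)) ↔ (w (f q1) = w (f q2)) := hQ (w * fe f) (mul_mem hw mem_f)
    rw [← hcross] at hQ'
    exact ⟨fun h => (hQ'.mp h.symm).symm, fun h => (hQ'.mpr h.symm).symm⟩
  exact shared hG w2 hw2M hw2 hαβ H'

lemma good_step_f (hG : IsPrimitive' G) (FS : FStruct n f)
    (w2 : Function.End (Fin n)) (hw2M : w2 ∈ genMon G f) (hw2 : rnk w2 = 2)
    {p1 p2 q1 q2 : Fin n} (hd : distinct6 p1 p2 q1 q2) (hQ : QQ G f p1 p2 q1 q2) :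
    distinct6 (f p1) (f p2) (f q1) (f q2) := by
  have hpair : f p1 ≠ f p2 := by
    intro he
    have hq : f q1 = f q2 := (hQ (fe f) mem_f).mp he
    obtain ⟨h1, h2, h3, h4, h5, h6⟩ := hd
    rcases FS.hcol p1 p2 he with h | h | h
    · exact h1 h
    · rcases FS.hcol q1 q2 hq with h' | h' | h'
      · exact h2 h'
      · exact h3 (h.1.trans h'.1.symm)
      · exact h4 (h.1.trans h'.2.symm)
    · rcases FS.hcol q1 q2 hq with h' | h' | h'
      · exact h2 h'
      · exact h4 (h.1.trans h'.2.symm)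
      · exact h3 (h.1.trans h'.1.symm)
  have hqair : f q1 ≠ f q2 := by
    intro he
    exact hpair ((hQ (fe f) mem_f).mpr he)
  refine ⟨hpair, hqair, ?_, ?_, ?_, ?_⟩
  · exact fun he => cross_case hG FS w2 hw2M hw2 hd hQ he
  · exact fun he => cross_case hG FS w2 hw2M hw2 (d6_swap_q hd) (QQ_swap_q hQ) he
  · exact fun he => cross_case hG FS w2 hw2M hw2 (d6_swap_p hd) (QQ_swap_p hQ) he
  · exact fun he => cross_case hG FS w2 hw2M hw2 (d6_swap_p (d6_swap_q hd))
      (QQ_swap_p (QQ_swap_q hQ)) he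

/-- An indistinguishable disjoint pair of 2-sets is impossible. -/
lemma good_all (hG : IsPrimitive' G) (FS : FStruct n f) (hn : 3 ≤ n)
    {a1 a2 b1 b2 : Fin n} (hd : distinct6 a1 a2 b1 b2) (hQ0 : QQ G f a1 a2 b1 b2) :
    False := by
  obtain ⟨w1, hw1M, hw1⟩ := exists_const hG FS hn
  obtain ⟨w2, hw2M, hw2⟩ := exists_rank_two FS (by omega) ⟨w1, hw1M, by omega⟩
  have main : ∀ (l : List (Function.End (Fin n))),
      (∀ y ∈ l, y ∈ (permSet G ∪ {f} : Set (Function.End (Fin n)))) →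
      distinct6 (l.prod a1) (l.prod a2) (l.prod b1) (l.prod b2) ∧
      QQ G f (l.prod a1) (l.prod a2) (l.prod b1) (l.prod b2) := by
    intro l
    induction l with
    | nil => exact fun _ => ⟨hd, hQ0⟩
    | cons a t ih =>
        intro hmem
        obtain ⟨ihd, ihQ⟩ := ih (fun y hy => hmem y (List.mem_cons_of_mem _ hy))
        have hpc : ∀ x : Fin n, (a :: t).prod x = a (t.prod x) := by
          intro x; rw [List.prod_cons]; rfl
        rcases hmem a List.mem_cons_self with ⟨g, hg, rfl⟩ | ha
        · constructor
          · obtain ⟨h1, h2, h3, h4, h5, h6⟩ := ihd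
            simp only [hpc]
            exact ⟨fun he => h1 (g.injective he), fun he => h2 (g.injective he),
              fun he => h3 (g.injective he), fun he => h4 (g.injective he),
              fun he => h5 (g.injective he), fun he => h6 (g.injective he)⟩
          · simp only [hpc]
            exact QQ_g g hg ihQ
        · have haf : a = fe f := Set.mem_singleton_iff.mp ha
          subst haf
          constructor
          · simp only [hpc]
            exact good_step_f hG FS w2 hw2M hw2 ihd ihQ
          · simp only [hpc]
            exact QQ_f ihQ
  obtain ⟨l, hl, hlp⟩ := Submonoid.exists_list_of_mem_closure hw1M
  obtain ⟨hd', -⟩ := main l hl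
  rw [hlp] at hd'
  obtain ⟨c, hc⟩ := Finset.card_eq_one.mp hw1
  have hval : ∀ x, w1 x = c := by
    intro x
    have : w1 x ∈ univ.image w1 := Finset.mem_image.mpr ⟨x, mem_univ _, rfl⟩
    rw [hc] at this
    exact Finset.mem_singleton.mp this
  exact hd'.1 ((hval a1).trans (hval a2).symm)

/-- main separation lemma -/
lemma separation (hG : IsPrimitive' G) (FS : FStruct n f) (hn : 3 ≤ n)
    {a1 a2 b1 b2 : Fin n} (ha : a1 ≠ a2) (hb : b1 ≠ b2)
    (hAB : ({a1, a2} : Finset (Fin n)) ≠ {b1, b2}) :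
    ∃ w ∈ genMon G f, Xor' (w a1 = w a2) (w b1 = w b2) := by
  by_contra hcon
  push_neg at hcon
  have H : ∀ w ∈ genMon G f, (w a1 = w a2 ↔ w b1 = w b2) := by
    intro w hw
    have hx := hcon w hw
    unfold Xor' Xor at hx
    push_neg at hx
    constructor
    · intro h
      by_contra hq
      exact hq (by tauto)
    · intro h
      by_contra hq
      exact hq (by tauto)
  obtain ⟨w1, hw1M, hw1⟩ := exists_const hG FS hn
  obtain ⟨w2, hw2M, hw2⟩ := exists_rank_two FS (by omega) ⟨w1, hw1M, by omega⟩
  by_cases h11 : a1 = b1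
  · subst h11
    have hne : a2 ≠ b2 := fun he => hAB (by rw [he])
    exact shared hG w2 hw2M hw2 hne (fun w hw =>
      ⟨fun h => ((H w hw).mp h.symm).symm, fun h => ((H w hw).mpr h.symm).symm⟩)
  by_cases h12 : a1 = b2
  · subst h12
    have hne : a2 ≠ b1 := by
      intro he
      exact hAB (by rw [← he]; exact Finset.pair_comm a1 a2)
    exact shared hG w2 hw2M hw2 hne (fun w hw =>
      ⟨fun h => (H w hw).mp h.symm, fun h => ((H w hw).mpr h).symm⟩)
  by_cases h21 : a2 = b1
  · subst h21
    have hne : a1 ≠ b2 := by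
      intro he
      exact hAB (by rw [← he]; exact Finset.pair_comm a1 a2)
    exact shared hG w2 hw2M hw2 hne (fun w hw =>
      ⟨fun h => ((H w hw).mp h).symm, fun h => (H w hw).mpr h.symm⟩)
  by_cases h22 : a2 = b2
  · subst h22
    exact shared hG w2 hw2M hw2 h11 (fun w hw => H w hw)
  · exact (good_all hG FS hn ⟨ha, hb, h11, h12, h21, h22⟩ H).elim


lemma pair_image_card (w : Fin n → Fin n) {x y : Fin n} (hxy : x ≠ y) :
    ((({x, y} : Finset (Fin n))).image w).card = 1 ↔ w x = w y := by
  have him : (({x, y} : Finset (Fin n))).image w = insert (w x) {w y} := by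
    rw [show ({x, y} : Finset (Fin n)) = insert x {y} from rfl, Finset.image_insert,
      Finset.image_singleton]
  constructor
  · intro h
    by_contra hne
    rw [him, Finset.card_insert_of_notMem (by simp [hne]), Finset.card_singleton] at h
    omega
  · intro h
    rw [him, h, Finset.insert_eq_self.mpr (Finset.mem_singleton_self _),
      Finset.card_singleton]

section Converse

/-- the converse: a block yields an indistinguishable pair of 2-sets -/
lemma converse_block {Δ : Finset (Fin n)} (h1 : 1 < Δ.card) (h2 : Δ.card < n)
    (hblock : ∀ g ∈ G, Δ.image ⇑g = Δ ∨ Disjoint (Δ.image ⇑g) Δ) :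
    ¬ (∀ f : Fin n → Fin n, (univ.image f).card = n - 1 →
        ∀ A B : Finset (Fin n), A.card = 2 → B.card = 2 → A ≠ B →
          ∃ g ∈ genMon G f,
            Xor' ((A.image g).card = 1) ((B.image g).card = 1)) := by
  classical
  intro hRHS
  obtain ⟨a, haΔ, b, hbΔ, hab⟩ := Finset.one_lt_card.mp h1
  set f : Fin n → Fin n := fun x => if x = b then a else x with hfdef
  have hfa : ∀ x, x ≠ b → f x = x := fun x hx => if_neg hx
  have hfb : f b = a := if_pos rfl
  have hcol : ∀ p q : Fin n, p ≠ q → f p = f q → (p ∈ Δ ∧ q ∈ Δ) := by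
    intro p q hpq he
    by_cases hp : p = b
    · by_cases hq : q = b
      · exact absurd (hp.trans hq.symm) hpq
      · rw [hp, hfb, hfa q hq] at he
        exact ⟨hp ▸ hbΔ, he ▸ haΔ⟩
    · by_cases hq : q = b
      · rw [hfa p hp, hq, hfb] at he
        exact ⟨he ▸ haΔ, hq ▸ hbΔ⟩
      · rw [hfa p hp, hfa q hq] at he
        exact absurd he hpq
  have hfrank : (univ.image f).card = n - 1 := by
    have him : univ.image f = univ.erase b := by
      ext z
      simp only [Finset.mem_image, Finset.mem_erase, mem_univ, true_and, and_true]
      constructor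
      · rintro ⟨x, -, rfl⟩
        by_cases hx : x = b
        · rw [hx, hfb]; exact hab
        · rw [hfa x hx]; exact hx
      · intro hz
        exact ⟨z, hfa z hz⟩
    rw [him, Finset.card_erase_of_mem (mem_univ _), Finset.card_univ, Fintype.card_fin]
  obtain ⟨y, hy⟩ : ∃ y, y ∉ Δ := by
    by_contra hc
    push_neg at hc
    have := Finset.eq_univ_iff_forall.mpr hc
    rw [this, Finset.card_univ, Fintype.card_fin] at h2
    omega
  have hTg : ∀ g ∈ G, ∀ x, x ∈ Δ.image ⇑g → x ∈ Δ → Δ.image ⇑g = Δ := by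
    intro g hg x hx1 hx2
    rcases hblock g hg with h | h
    · exact h
    · exact absurd hx2 (Finset.disjoint_left.mp h hx1)
  -- pair invariant
  set PI : Fin n → Fin n → Prop :=
    fun p q => p ≠ q ∧ ∀ g ∈ G, ¬(p ∈ Δ.image ⇑g ∧ q ∈ Δ.image ⇑g) with hPIdef
  have hmem_one : ∀ x : Fin n, x ∈ Δ.image ⇑(1 : Equiv.Perm (Fin n)) ↔ x ∈ Δ := by
    intro x
    simp
  have hPI_g : ∀ (g' : Equiv.Perm (Fin n)), g' ∈ G → ∀ p q, PI p q → PI (g' p) (g' q) := by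
    intro g' hg' p q ⟨hpq, hpi⟩
    refine ⟨fun he => hpq (g'.injective he), ?_⟩
    intro g hg ⟨hp, hq⟩
    have key : ∀ x : Fin n, g' x ∈ Δ.image ⇑g → x ∈ Δ.image ⇑(g'⁻¹ * g) := by
      intro x hx
      have : Δ.image ⇑(g'⁻¹ * g) = (Δ.image ⇑g).image ⇑g'⁻¹ := by
        rw [Finset.image_image]
        rfl
      rw [this]
      refine Finset.mem_image.mpr ⟨g' x, hx, ?_⟩
      simp
    exact hpi (g'⁻¹ * g) (mul_mem (inv_mem hg') hg) ⟨key p hp, key q hq⟩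
  have hPI_f : ∀ p q, PI p q → PI (f p) (f q) := by
    intro p q ⟨hpq, hpi⟩
    have hone : ¬(p ∈ Δ ∧ q ∈ Δ) := by
      intro ⟨hp, hq⟩
      exact hpi 1 (one_mem G) ⟨(hmem_one p).mpr hp, (hmem_one q).mpr hq⟩
    constructor
    · intro he
      exact hone (hcol p q hpq he)
    · intro g hg ⟨hp, hq⟩
      by_cases hpb : p = b
      · by_cases hqb : q = b
        · exact hpq (hpb.trans hqb.symm)
        · rw [hpb, hfb] at hp
          have hTΔ : Δ.image ⇑g = Δ := hTg g hg a hp haΔ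
          rw [hfa q hqb] at hq
          rw [hTΔ] at hq
          exact hone ⟨hpb ▸ hbΔ, hq⟩
      · by_cases hqb : q = b
        · rw [hqb, hfb] at hq
          have hTΔ : Δ.image ⇑g = Δ := hTg g hg a hq haΔ
          rw [hfa p hpb] at hp
          rw [hTΔ] at hp
          exact hone ⟨hp, hqb ▸ hbΔ⟩
        · rw [hfa p hpb] at hp
          rw [hfa q hqb] at hq
          exact hpi g hg ⟨hp, hq⟩
  have hbase : ∀ x, x ∈ Δ → PI x y := by
    intro x hxΔ
    refine ⟨fun he => hy (he ▸ hxΔ), ?_⟩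
    intro g hg ⟨hx, hyg⟩
    have hTΔ : Δ.image ⇑g = Δ := hTg g hg x hx hxΔ
    rw [hTΔ] at hyg
    exact hy hyg
  have main : ∀ (l : List (Function.End (Fin n))),
      (∀ z ∈ l, z ∈ (permSet G ∪ {f} : Set (Function.End (Fin n)))) →
      PI (l.prod a) (l.prod y) ∧ PI (l.prod b) (l.prod y) := by
    intro l
    induction l with
    | nil => exact fun _ => ⟨hbase a haΔ, hbase b hbΔ⟩
    | cons c t ih =>
        intro hmem
        obtain ⟨ih1, ih2⟩ := ih (fun z hz => hmem z (List.mem_cons_of_mem _ hz))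
        have hpc : ∀ x : Fin n, (c :: t).prod x = c (t.prod x) := by
          intro x; rw [List.prod_cons]; rfl
        rcases hmem c List.mem_cons_self with ⟨g, hg, rfl⟩ | hc
        · simp only [hpc]
          exact ⟨hPI_g g hg _ _ ih1, hPI_g g hg _ _ ih2⟩
        · have hcf : c = fe f := Set.mem_singleton_iff.mp hc
          subst hcf
          simp only [hpc]
          exact ⟨hPI_f _ _ ih1, hPI_f _ _ ih2⟩
  have hya : a ≠ y := fun he => hy (he ▸ haΔ)
  have hyb : b ≠ y := fun he => hy (he ▸ hbΔ)
  have hABne : ({a, y} : Finset (Fin n)) ≠ {b, y} := by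
    intro he
    have : a ∈ ({b, y} : Finset (Fin n)) := he ▸ Finset.mem_insert_self a {y}
    rcases Finset.mem_insert.mp this with h | h
    · exact hab h
    · exact hya (Finset.mem_singleton.mp h)
  obtain ⟨w, hwM, hxor⟩ := hRHS f hfrank {a, y} {b, y}
    (Finset.card_pair hya) (Finset.card_pair hyb) hABne
  obtain ⟨l, hl, hlp⟩ := Submonoid.exists_list_of_mem_closure hwM
  obtain ⟨⟨hI1, -⟩, ⟨hI2, -⟩⟩ := main l hl
  rw [hlp] at hI1 hI2
  rw [pair_image_card w hya, pair_image_card w hyb] at hxor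
  rcases hxor with ⟨h, -⟩ | ⟨h, -⟩
  · exact hI1 h
  · exact hI2 h

end Converse

end TwoSetSep

theorem primitive_iff_2_set_distinguishable {n : ℕ}
    (G : Subgroup (Equiv.Perm (Fin n))) :
    IsPrimitive' G ↔
      ∀ f : Fin n → Fin n, (univ.image f).card = n - 1 →
        ∀ A B : Finset (Fin n), A.card = 2 → B.card = 2 → A ≠ B →
          ∃ g ∈ genMon G f,
            Xor' ((A.image g).card = 1) ((B.image g).card = 1) := by
  constructor
  · intro hG f hf A B hA hB hAB
    by_cases hn : 3 ≤ n
    · obtain ⟨a1, a2, ha, rfl⟩ := Finset.card_eq_two.mp hA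
      obtain ⟨b1, b2, hb, rfl⟩ := Finset.card_eq_two.mp hB
      obtain ⟨FS⟩ := TwoSetSep.exists_fstruct hf (by omega)
      obtain ⟨w, hwM, hxor⟩ := TwoSetSep.separation hG FS hn ha hb hAB
      refine ⟨w, hwM, ?_⟩
      rw [TwoSetSep.pair_image_card w ha, TwoSetSep.pair_image_card w hb]
      exact hxor
    · exfalso
      have hAu : A.card ≤ n := by
        have := Finset.card_le_card A.subset_univ
        simpa using this
      have hn2 : n = 2 := by omega
      have hA2 : A = univ := Finset.eq_univ_of_card A (by rw [hA]; simp [hn2])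
      have hB2 : B = univ := Finset.eq_univ_of_card B (by rw [hB]; simp [hn2])
      exact hAB (hA2.trans hB2.symm)
  · intro hRHS
    rintro ⟨Δ, h1, h2, hblock⟩
    exact TwoSetSep.converse_block h1 h2 hblock hRHS
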